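/- Let X be a topological space and F a family of subsets of X. The following are equivalent: (1) X is F-[ω,λ]-compact for every infinite cardinal λ; (2) X is F-D-compact for every ultrafilter D; (3) for every infinite cardinal λ there exists a regular ultrafilter D over λ such that X is F-D-compact. -/

import Mathlib

open Cardinal Set

universe u v

/-- `x` is a `D`-limit point of the family of sets `O`. -/
def DLimitSets {X : Type u} {I : Type v} [TopologicalSpace X]
    (D : Ultrafilter I) (O : I → Set X) (x : X) : Prop :=
  ∀ U ∈ nhds x, {i | (U ∩ O i).Nonempty} ∈ D

/-- `X` is `D`-pseudocompact. -/
def DPseudocompact (X : Type u) {I : Type v} [TopologicalSpace X]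
    (D : Ultrafilter I) : Prop :=
  ∀ O : I → Set X, (∀ i, IsOpen (O i)) → (∀ i, (O i).Nonempty) →
    ∃ x : X, DLimitSets D O x

/-- Every open cover of cardinality at most `lam` has a finite subfamily with dense union. -/
def WeaklyInitiallyCompact (X : Type u) [TopologicalSpace X] (lam : Cardinal.{u}) : Prop :=
  ∀ 𝒰 : Set (Set X), (∀ U ∈ 𝒰, IsOpen U) → ⋃₀ 𝒰 = Set.univ →
    Cardinal.mk 𝒰 ≤ lam →
    ∃ t : Finset (Set X), ↑t ⊆ 𝒰 ∧ Dense (⋃₀ (t : Set (Set X)))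

/-- A regular ultrafilter over `I` (regular of degree `|I|`): there is an `I`-indexed
family of members of `D` every infinite subfamily of which has empty intersection. -/
def RegularUltrafilter {I : Type v} (D : Ultrafilter I) : Prop :=
  ∃ Z : I → Set I, (∀ i, Z i ∈ D) ∧
    ∀ S : Set I, S.Infinite → ⋂ i ∈ S, Z i = ∅

/-- `X` is `F`-`[ω,λ]`-compact. -/
def FOmegaLamCompact (X : Type u) [TopologicalSpace X]
    (F : Set (Set X)) (lam : Cardinal.{u}) : Prop :=
  ∀ 𝒰 : Set (Set X), (∀ U ∈ 𝒰, IsOpen U) → ⋃₀ 𝒰 = Set.univ →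
    Cardinal.mk 𝒰 ≤ lam →
    ∃ t : Finset (Set X), ↑t ⊆ 𝒰 ∧
      ∀ A ∈ F, (A ∩ ⋃₀ (t : Set (Set X))).Nonempty

/-- `X` is `F`-`D`-compact. -/
def FDCompact (X : Type u) {I : Type v} [TopologicalSpace X]
    (F : Set (Set X)) (D : Ultrafilter I) : Prop :=
  ∀ f : I → Set X, (∀ i, f i ∈ F) → ∃ x : X, DLimitSets D f x

section Aux

variable {X : Type u} [TopologicalSpace X] (F : Set (Set X))

lemma lemA (h : ∀ lam : Cardinal.{u}, Cardinal.aleph0 ≤ lam → FOmegaLamCompact X F lam) :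
    ∀ (I : Type u) (D : Ultrafilter I), FDCompact X F D := by
  intro I D f hf
  by_contra hx
  push_neg at hx
  have key : ∀ x : X, ∃ V : Set X, IsOpen V ∧ x ∈ V ∧ {i | V ∩ f i = ∅} ∈ D := by
    intro x
    have hx' := hx x
    unfold DLimitSets at hx'
    push_neg at hx'
    obtain ⟨U, hU, hUD⟩ := hx'
    obtain ⟨V, hVU, hVopen, hxV⟩ := mem_nhds_iff.mp hU
    refine ⟨V, hVopen, hxV, ?_⟩
    have hnot : {i | (V ∩ f i).Nonempty} ∉ D := by
      intro hmem
      exact hUD (D.toFilter.sets_of_superset hmem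
        (fun i ⟨y, hy⟩ => ⟨y, hVU hy.1, hy.2⟩))
    have : {i | (V ∩ f i).Nonempty}ᶜ ∈ D := Ultrafilter.compl_mem_iff_notMem.mpr hnot
    convert this using 1
    ext i
    simp [Set.not_nonempty_iff_eq_empty]
  choose V hVopen hxV hVD using key
  set 𝒰 : Set (Set X) := Set.range V with h𝒰
  obtain ⟨t, ht𝒰, htF⟩ := h (max (Cardinal.mk ↥𝒰) Cardinal.aleph0) (le_max_right _ _) 𝒰
    (by rintro U ⟨x, rfl⟩; exact hVopen x)
    (by
      rw [Set.eq_univ_iff_forall]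
      intro y
      exact ⟨V y, Set.mem_range_self y, hxV y⟩)
    (le_max_left _ _)
  have hmem : (⋂ U ∈ t, {i | U ∩ f i = ∅}) ∈ (D : Filter I) := by
    refine (Filter.biInter_finset_mem t).mpr ?_
    intro U hU
    obtain ⟨x, rfl⟩ := ht𝒰 hU
    exact hVD x
  obtain ⟨i, hi⟩ := Filter.nonempty_of_mem hmem
  rw [Set.mem_iInter₂] at hi
  obtain ⟨y, hyA, hyU⟩ := htF (f i) (hf i)
  obtain ⟨U, hUt, hyU'⟩ := hyU
  have hempty : U ∩ f i = ∅ := hi U hUt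
  have : y ∈ U ∩ f i := ⟨hyU', hyA⟩
  rw [hempty] at this
  exact this

lemma lemB (h : ∀ (I : Type u) (D : Ultrafilter I), FDCompact X F D) :
    ∀ lam : Cardinal.{u}, Cardinal.aleph0 ≤ lam →
      ∃ (I : Type u) (D : Ultrafilter I), Cardinal.mk I = lam ∧
        RegularUltrafilter D ∧ FDCompact X F D := by
  intro lam hlam
  set K := lam.out with hKdef
  have hK : Cardinal.mk K = lam := Cardinal.mk_out lam
  haveI : Infinite K := Cardinal.infinite_iff.mpr (hK ▸ hlam)
  have hI : Cardinal.mk (Finset K) = lam := by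
    rw [Cardinal.mk_finset_of_infinite, hK]
  haveI : Filter.NeBot (Filter.atTop : Filter (Finset K)) := Filter.atTop_neBot
  set D := Ultrafilter.of (Filter.atTop : Filter (Finset K)) with hDdef
  have hD : ↑D ≤ (Filter.atTop : Filter (Finset K)) := Ultrafilter.of_le _
  obtain ⟨e⟩ : Nonempty (Finset K ≃ K) := Cardinal.eq.mp (hI.trans hK.symm)
  refine ⟨Finset K, D, hI, ⟨fun s => {u | e s ∈ u}, ?_, ?_⟩, h _ D⟩
  · intro s
    apply hD
    exact Filter.mem_atTop_sets.mpr
      ⟨{e s}, fun u hu => Finset.singleton_subset_iff.mp hu⟩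
  · intro S hS
    rw [Set.eq_empty_iff_forall_notMem]
    intro u hu
    rw [Set.mem_iInter₂] at hu
    have hsub : S ⊆ e ⁻¹' (↑u : Set K) := fun s hs => hu s hs
    have hfin : (e ⁻¹' (↑u : Set K)).Finite :=
      (u.finite_toSet).preimage e.injective.injOn
    exact hS (hfin.subset hsub)

lemma lemC (h : ∀ lam : Cardinal.{u}, Cardinal.aleph0 ≤ lam →
      ∃ (I : Type u) (D : Ultrafilter I), Cardinal.mk I = lam ∧
        RegularUltrafilter D ∧ FDCompact X F D) :
    ∀ lam : Cardinal.{u}, Cardinal.aleph0 ≤ lam → FOmegaLamCompact X F lam := by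
  classical
  intro lam hlam 𝒰 hopen hcover hcard
  obtain ⟨I, D, hmkI, ⟨Z, hZD, hZreg⟩, hcomp⟩ := h lam hlam
  by_contra hcon
  push_neg at hcon
  have hcon' : ∀ t : Finset (Set X), ↑t ⊆ 𝒰 → ∃ A ∈ F, A ∩ ⋃₀ (t : Set (Set X)) = ∅ := hcon
  obtain ⟨A₀, hA₀F, _⟩ := hcon' ∅ (by simp)
  have h𝒰ne : 𝒰.Nonempty := by
    rw [Set.nonempty_iff_ne_empty]
    intro hne
    rw [hne] at hcover
    simp only [Set.sUnion_empty] at hcover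
    haveI : IsEmpty X := Set.univ_eq_empty_iff.mp hcover.symm
    obtain ⟨x, _⟩ := hcomp (fun _ => A₀) (fun _ => hA₀F)
    exact IsEmpty.false x
  have hle : Cardinal.mk ↥𝒰 ≤ Cardinal.mk I := by rw [hmkI]; exact hcard
  obtain ⟨emb⟩ := Cardinal.le_def _ _ |>.mp hle
  haveI : Nonempty ↥𝒰 := h𝒰ne.to_subtype
  have hsurj : Function.Surjective (Function.invFun emb) :=
    Function.invFun_surjective emb.injective
  set g : I → Set X := fun i => ((Function.invFun emb i : ↥𝒰) : Set X) with hgdef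
  have hg𝒰 : ∀ i, g i ∈ 𝒰 := fun i => (Function.invFun emb i).2
  have hgsurj : ∀ U ∈ 𝒰, ∃ i, g i = U := by
    intro U hU
    obtain ⟨i, hi⟩ := hsurj ⟨U, hU⟩
    exact ⟨i, by rw [hgdef]; simp [hi]⟩
  have hfin : ∀ j : I, {i | j ∈ Z i}.Finite := by
    intro j
    by_contra hinf
    have hj : j ∈ ⋂ i ∈ {i | j ∈ Z i}, Z i := Set.mem_iInter₂.mpr fun i hi => hi
    rw [hZreg _ hinf] at hj
    exact hj
  set tJ : I → Finset (Set X) := fun j => (hfin j).toFinset.image g with htJdef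
  have htJ𝒰 : ∀ j, ↑(tJ j) ⊆ 𝒰 := by
    intro j U hU
    simp only [htJdef, Finset.coe_image, Set.mem_image, Set.Finite.coe_toFinset] at hU
    obtain ⟨i, _, rfl⟩ := hU
    exact hg𝒰 i
  have hA : ∀ j, ∃ A ∈ F, A ∩ ⋃₀ (↑(tJ j) : Set (Set X)) = ∅ := fun j => hcon' (tJ j) (htJ𝒰 j)
  choose A hAF hAe using hA
  obtain ⟨x, hx⟩ := hcomp A hAF
  have hxU : x ∈ ⋃₀ 𝒰 := by rw [hcover]; trivial
  obtain ⟨U, hU𝒰, hxU'⟩ := hxU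
  obtain ⟨i₀, rfl⟩ := hgsurj U hU𝒰
  have h1 : {j | (g i₀ ∩ A j).Nonempty} ∈ D := hx _ ((hopen _ hU𝒰).mem_nhds hxU')
  obtain ⟨j, hj1, hj2⟩ := Filter.nonempty_of_mem (Filter.inter_mem h1 (hZD i₀))
  have hmemT : g i₀ ∈ tJ j :=
    Finset.mem_image.mpr ⟨i₀, (hfin j).mem_toFinset.mpr hj2, rfl⟩
  obtain ⟨y, hy1, hy2⟩ := hj1
  have hyIn : y ∈ A j ∩ ⋃₀ (↑(tJ j) : Set (Set X)) := ⟨hy2, g i₀, hmemT, hy1⟩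
  rw [hAe j] at hyIn
  exact hyIn

end Aux

theorem fOmegaLamCompact_tfae {X : Type u} [TopologicalSpace X] (F : Set (Set X)) :
    ((∀ lam : Cardinal.{u}, Cardinal.aleph0 ≤ lam → FOmegaLamCompact X F lam) ↔
        (∀ (I : Type u) (D : Ultrafilter I), FDCompact X F D)) ∧
      ((∀ (I : Type u) (D : Ultrafilter I), FDCompact X F D) ↔
        (∀ lam : Cardinal.{u}, Cardinal.aleph0 ≤ lam →
          ∃ (I : Type u) (D : Ultrafilter I), Cardinal.mk I = lam ∧
            RegularUltrafilter D ∧ FDCompact X F D)) := by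
  exact ⟨⟨fun h1 => lemA F h1, fun h2 => lemC F (lemB F h2)⟩,
    ⟨fun h2 => lemB F h2, fun h3 => lemA F (lemC F h3)⟩⟩
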